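/- Let n, k be integers with n ≥ k ≥ 1. Let (U_j)_{1≤j≤k} be i.i.d. uniform random variables on (0,1) and (X_j)_{1≤j≤k} be i.i.d. exponential random variables with parameter 1, all mutually independent, and set S_k = U₁X₁ + ⋯ + U_kX_k. Then the unsigned Stirling number of the first kind satisfies [n,k] = C(n,k) · E[S_k^{n−k}]. -/

import Mathlib

open MeasureTheory ProbabilityTheory Finset
open scoped NNReal ENNReal


/-- The unsigned Stirling numbers of the first kind. -/
def stirling1 : ℕ → ℕ → ℕ
  | 0, 0 => 1
  | 0, _ + 1 => 0
  | _ + 1, 0 => 0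
  | n + 1, k + 1 => n * stirling1 n (k + 1) + stirling1 n k

lemma stirling1_zero_right : ∀ n, stirling1 n 0 = if n = 0 then 1 else 0
  | 0 => rfl
  | _ + 1 => rfl

lemma stirling1_succ (n k : ℕ) :
    stirling1 (n + 1) (k + 1) = n * stirling1 n (k + 1) + stirling1 n k := rfl

lemma stirling1_eq_zero : ∀ n k, n < k → stirling1 n k = 0
  | 0, 0 => fun h => absurd h (by omega)
  | 0, _ + 1 => fun _ => rfl
  | n + 1, 0 => fun h => absurd h (by omega)
  | n + 1, k + 1 => fun h => by
      rw [stirling1_succ, stirling1_eq_zero n (k+1) (by omega),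
        stirling1_eq_zero n k (by omega)]
      simp

lemma stirling1_one : ∀ n, stirling1 (n + 1) 1 = Nat.factorial n
  | 0 => rfl
  | n + 1 => by
      rw [stirling1_succ, stirling1_one n, stirling1_zero_right]
      simp [Nat.factorial_succ]

/-- key convolution identity. -/
lemma stirling1_conv : ∀ n k, (k + 1) * stirling1 n (k + 1)
    = ∑ i ∈ range n, n.choose (i+1) * Nat.factorial i * stirling1 (n - (i+1)) k := by
  intro n
  induction n with
  | zero => intro k; simp [stirling1_eq_zero 0 (k+1) (by omega)]
  | succ n ih =>
    intro k
    cases k with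
    | zero =>
      rw [Finset.sum_eq_single_of_mem n (by simp)]
      · simp [stirling1_one, stirling1_zero_right]
      · intro i hi hne
        simp only [mem_range] at hi
        rw [stirling1_zero_right, if_neg (by omega)]
        simp
    | succ k =>
      calc (k + 1 + 1) * stirling1 (n+1) (k+1+1)
          = (k+2) * (n * stirling1 n (k+2) + stirling1 n (k+1)) := by
            rw [stirling1_succ]
        _ = n * ((k+2) * stirling1 n (k+2)) + ((k+1) * stirling1 n (k+1)
              + stirling1 n (k+1)) := by ring
        _ = n * (∑ i ∈ range n, n.choose (i+1) * Nat.factorial i * stirling1 (n - (i+1)) (k+1))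
              + ((∑ i ∈ range n, n.choose (i+1) * Nat.factorial i * stirling1 (n - (i+1)) k)
              + stirling1 n (k+1)) := by rw [ih (k+1), ih k]
        _ = (∑ i ∈ range n, (n.choose (i+1) * Nat.factorial i
                * ((n - (i+1)) * stirling1 (n - (i+1)) (k+1) + stirling1 (n - (i+1)) k)
              + n.choose (i+1) * Nat.factorial (i+1) * stirling1 (n - (i+1)) (k+1)))
              + stirling1 n (k+1) := by
            have key : ∀ i ∈ range n,
                n.choose (i+1) * Nat.factorial i
                  * ((n - (i+1)) * stirling1 (n - (i+1)) (k+1) + stirling1 (n - (i+1)) k)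
                + n.choose (i+1) * Nat.factorial (i+1) * stirling1 (n - (i+1)) (k+1)
                = n * (n.choose (i+1) * Nat.factorial i * stirling1 (n - (i+1)) (k+1))
                  + n.choose (i+1) * Nat.factorial i * stirling1 (n - (i+1)) k := by
              intro i hi
              simp only [mem_range] at hi
              have hfac : Nat.factorial (i+1) = (i+1) * Nat.factorial i := Nat.factorial_succ i
              have hni : n - (i+1) + (i+1) = n := by omega
              rw [hfac]
              generalize stirling1 (n - (i+1)) (k+1) = s
              generalize stirling1 (n - (i+1)) k = t
              generalize hm : n - (i+1) = m
              rw [hm] at hni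
              subst hni
              ring
            rw [Finset.sum_congr rfl key, Finset.sum_add_distrib, ← Finset.mul_sum]
            ring
        _ = (∑ i ∈ range n, n.choose (i+1) * Nat.factorial i * stirling1 (n - i) (k+1))
              + (∑ i ∈ range n, n.choose (i+1) * Nat.factorial (i+1)
                  * stirling1 (n - (i+1)) (k+1))
              + stirling1 n (k+1) := by
            rw [Finset.sum_add_distrib]
            congr 1
            · congr 1
              refine Finset.sum_congr rfl fun i hi => ?_
              simp only [mem_range] at hi
              rw [show n - i = (n - (i+1)) + 1 by omega, stirling1_succ]
        _ = ∑ i ∈ range (n+1), (n+1).choose (i+1) * Nat.factorial i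
              * stirling1 (n + 1 - (i+1)) (k+1) := by
            have e1 : ∑ i ∈ range (n+1), (n+1).choose (i+1) * Nat.factorial i
                  * stirling1 (n + 1 - (i+1)) (k+1)
                = ∑ i ∈ range (n+1), (n.choose (i+1) * Nat.factorial i * stirling1 (n - i) (k+1)
                    + n.choose i * Nat.factorial i * stirling1 (n - i) (k+1)) := by
              refine Finset.sum_congr rfl fun i hi => ?_
              rw [show n + 1 - (i+1) = n - i by omega, Nat.choose_succ_succ, add_mul, add_mul]
              simp [Nat.succ_eq_add_one]
              ring
            rw [e1, Finset.sum_add_distrib]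
            have e2 : ∑ i ∈ range (n+1), n.choose (i+1) * Nat.factorial i
                  * stirling1 (n - i) (k+1)
                = ∑ i ∈ range n, n.choose (i+1) * Nat.factorial i * stirling1 (n - i) (k+1) := by
              rw [Finset.sum_range_succ, Nat.choose_succ_self]
              simp
            have e3 : ∑ i ∈ range (n+1), n.choose i * Nat.factorial i * stirling1 (n - i) (k+1)
                = stirling1 n (k+1) + ∑ i ∈ range n, n.choose (i+1) * Nat.factorial (i+1)
                    * stirling1 (n - (i+1)) (k+1) := by
              rw [Finset.sum_range_succ']
              simp
              exact add_comm _ _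
            rw [e2, e3]
            ring

noncomputable def hAux : ℕ → ℕ → ℝ
  | M, 0 => if M = 0 then 1 else 0
  | M, k + 1 => ∑ p ∈ Finset.HasAntidiagonal.antidiagonal M, (1/((p.1:ℝ)+1)) * hAux p.2 k

lemma hAux_zero (M : ℕ) : hAux M 0 = if M = 0 then 1 else 0 := rfl

lemma hAux_succ (M k : ℕ) :
    hAux M (k+1) = ∑ p ∈ Finset.HasAntidiagonal.antidiagonal M, (1/((p.1:ℝ)+1)) * hAux p.2 k := rfl

lemma sum_piAntidiag_eq_hAux {ι : Type*} [DecidableEq ι] (s : Finset ι) (M : ℕ) :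
    ∑ d ∈ piAntidiag s M, ∏ j ∈ s, (1:ℝ)/(d j + 1) = hAux M s.card := by
  induction s using Finset.cons_induction generalizing M with
  | empty =>
    rw [piAntidiag_empty]
    split_ifs with h
    · subst h; simp [hAux_zero]
    · simp [hAux_zero, h]
  | cons i s hi ih =>
    rw [piAntidiag_cons, sum_disjiUnion, card_cons, hAux_succ]
    refine Finset.sum_congr rfl fun p hp => ?_
    rw [Finset.sum_map, ← ih p.2, Finset.mul_sum]
    refine Finset.sum_congr rfl fun d hd => ?_
    rw [mem_piAntidiag] at hd
    have hdi : d i = 0 := by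
      by_contra h
      exact hi (hd.2 i h)
    rw [Finset.prod_cons]
    simp only [addRightEmbedding_apply, Pi.add_apply]
    rw [hdi]
    congr 1
    · norm_num
    · refine Finset.prod_congr rfl fun j hj => ?_
      rw [if_neg (by rintro rfl; exact hi hj), add_zero]

lemma factorial_mul_stirling1 : ∀ k n, k ≤ n →
    (Nat.factorial k : ℝ) * stirling1 n k = (Nat.factorial n : ℝ) * hAux (n - k) k := by
  intro k
  induction k with
  | zero =>
    intro n _
    rw [stirling1_zero_right, Nat.sub_zero, hAux_zero]
    split_ifs with h
    · subst h; simp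
    · simp
  | succ k ih =>
    intro n hkn
    set M := n - (k+1) with hM
    have hMn : M + (k+1) = n := by omega
    rw [hAux_succ, Finset.Nat.sum_antidiagonal_eq_sum_range_succ_mk, Finset.mul_sum]
    have key : ∀ i ∈ range (M+1),
        (Nat.factorial n : ℝ) * ((1/((i:ℝ)+1)) * hAux (M - i) k)
        = (Nat.factorial k : ℝ) * ((n.choose (i+1) : ℝ) * (Nat.factorial i : ℝ)
            * (stirling1 (n - (i+1)) k : ℝ)) := by
      intro i hi
      simp only [mem_range] at hi
      have hkn' : k ≤ n - (i+1) := by omega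
      have h1 := ih (n - (i+1)) hkn'
      rw [show n - (i+1) - k = M - i by omega] at h1
      have h2 : (n.choose (i+1)) * Nat.factorial (i+1) * Nat.factorial (n-(i+1))
          = Nat.factorial n := Nat.choose_mul_factorial_mul_factorial (by omega)
      have h2' : ((n.choose (i+1) : ℝ)) * (((i:ℝ)+1) * (Nat.factorial i : ℝ))
          * (Nat.factorial (n-(i+1)) : ℝ) = (Nat.factorial n : ℝ) := by
        rw [show ((i:ℝ)+1) * (Nat.factorial i : ℝ) = ((Nat.factorial (i+1) : ℕ) : ℝ) by
          rw [Nat.factorial_succ]; push_cast; ring]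
        exact_mod_cast congrArg (fun x : ℕ => (x:ℝ)) h2
      have hi1 : ((i:ℝ)+1) ≠ 0 := by positivity
      rw [← h2']
      field_simp
      linear_combination (-(n.choose (i+1) : ℝ)) * h1
    rw [Finset.sum_congr rfl key, ← Finset.mul_sum]
    have hext : ∑ i ∈ range (M+1), ((n.choose (i+1) : ℝ) * (Nat.factorial i : ℝ)
            * (stirling1 (n - (i+1)) k : ℝ))
        = ∑ i ∈ range n, ((n.choose (i+1) : ℝ) * (Nat.factorial i : ℝ)
            * (stirling1 (n - (i+1)) k : ℝ)) := by
      refine Finset.sum_subset (by intro x hx; simp only [mem_range] at *; omega) ?_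
      intro i hi hni
      simp only [mem_range] at hi hni
      rw [stirling1_eq_zero (n - (i+1)) k (by omega)]
      simp
    rw [hext]
    have hconv := stirling1_conv n k
    have hconv' : (∑ i ∈ range n, ((n.choose (i+1) : ℝ) * (Nat.factorial i : ℝ)
            * (stirling1 (n - (i+1)) k : ℝ)))
        = ((k:ℝ)+1) * (stirling1 n (k+1) : ℝ) := by
      exact_mod_cast congrArg (fun x : ℕ => (x:ℝ)) hconv.symm
    rw [hconv', Nat.factorial_succ]
    push_cast
    ring


section Aux
variable {Ω : Type*} [MeasurableSpace Ω] {P : Measure Ω} [IsProbabilityMeasure P]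

lemma indep_congr' {ι : Type*} {f g : ι → Ω → ℝ}
    (h : iIndepFun (m := fun _ : ι => (inferInstance : MeasurableSpace ℝ)) f P)
    (hfg : ∀ i, f i =ᵐ[P] g i) :
    iIndepFun (m := fun _ : ι => (inferInstance : MeasurableSpace ℝ)) g P := by
  rw [iIndepFun_iff_measure_inter_preimage_eq_mul] at h ⊢
  intro S sets hsets
  have hae : ∀ᵐ ω ∂P, ∀ i ∈ S, f i ω = g i ω :=
    (ae_ball_iff S.countable_toSet).mpr fun i _ => hfg i
  have hInter : (⋂ i ∈ S, g i ⁻¹' sets i) =ᵐ[P] (⋂ i ∈ S, f i ⁻¹' sets i) := by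
    rw [Filter.eventuallyEq_set]
    filter_upwards [hae] with ω hω
    simp only [Set.mem_iInter, Set.mem_preimage]
    constructor
    · intro hx i hi; rw [hω i hi]; exact hx i hi
    · intro hx i hi; rw [← hω i hi]; exact hx i hi
  rw [measure_congr hInter, h S hsets]
  refine Finset.prod_congr rfl fun i hi => ?_
  refine measure_congr ?_
  rw [Filter.eventuallyEq_set]
  filter_upwards [hfg i] with ω hω
  simp only [Set.mem_preimage, hω]

lemma integral_prod_indep {ι : Type*} (s : Finset ι) (F : ι → Ω → ℝ)
    (hind : iIndepFun (m := fun _ : ι => (inferInstance : MeasurableSpace ℝ)) F P)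
    (hmeas : ∀ i, Measurable (F i)) (hpos : ∀ i ω, 0 ≤ F i ω) :
    ∫ ω, ∏ i ∈ s, F i ω ∂P = ∏ i ∈ s, ∫ ω, F i ω ∂P := by
  classical
  induction s using Finset.cons_induction with
  | empty => simp
  | cons a s ha ih =>
    have hindf : IndepFun (∏ i ∈ s, F i) (F a) P :=
      hind.indepFun_finsetProd_of_notMem hmeas ha
    have hXp : 0 ≤ (∏ i ∈ s, F i) := by
      intro ω
      rw [Finset.prod_apply]
      exact Finset.prod_nonneg fun i _ => hpos i ω
    have hprod_eq : (∏ i ∈ s, F i) = fun ω => ∏ i ∈ s, F i ω :=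
      funext fun ω => Finset.prod_apply ω s F
    have hXm : AEMeasurable (∏ i ∈ s, F i) P := by
      rw [hprod_eq]
      exact (Finset.measurable_prod s fun i _ => hmeas i).aemeasurable
    have key := hindf.integral_mul_eq_mul_integral hXm.aestronglyMeasurable (hmeas a).aestronglyMeasurable
    have e1 : ((∏ i ∈ s, F i) * F a) = fun ω => F a ω * ∏ i ∈ s, F i ω := by
      ext ω; rw [Pi.mul_apply, Finset.prod_apply, mul_comm]
    have e2 : integral P ((∏ i ∈ s, F i)) = ∫ ω, ∏ i ∈ s, F i ω ∂P :=
      congrArg (integral P) hprod_eq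
    rw [e1, e2] at key
    simp only [Finset.prod_cons]
    rw [← ih]
    calc ∫ ω, F a ω * ∏ i ∈ s, F i ω ∂P
        = (∫ ω, ∏ i ∈ s, F i ω ∂P) * ∫ ω, F a ω ∂P := key
      _ = (∫ ω, F a ω ∂P) * ∫ ω, ∏ i ∈ s, F i ω ∂P := mul_comm _ _

lemma integrable_prod_indep {ι : Type*} (s : Finset ι) (F : ι → Ω → ℝ)
    (hind : iIndepFun (m := fun _ : ι => (inferInstance : MeasurableSpace ℝ)) F P)
    (hmeas : ∀ i, Measurable (F i)) (hint : ∀ i, Integrable (F i) P) :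
    Integrable (fun ω => ∏ i ∈ s, F i ω) P := by
  classical
  induction s using Finset.cons_induction with
  | empty => simp [integrable_const]
  | cons a s ha ih =>
    have hindf : IndepFun (∏ i ∈ s, F i) (F a) P :=
      hind.indepFun_finsetProd_of_notMem hmeas ha
    have ih' : Integrable (∏ i ∈ s, F i) P := by
      refine ih.congr ?_
      filter_upwards with ω
      rw [Finset.prod_apply]
    have key := hindf.integrable_mul ih' (hint a)
    refine key.congr ?_
    filter_upwards with ω
    rw [Pi.mul_apply, Finset.prod_apply, Finset.prod_cons, mul_comm]

end Aux

lemma integral_abs_pow_uniform (m : ℕ) :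
    ∫ x in Set.Ioo (0:ℝ) 1, |x| ^ m = 1/(m+1) := by
  rw [← MeasureTheory.integral_Ioc_eq_integral_Ioo,
    ← intervalIntegral.integral_of_le zero_le_one]
  calc ∫ x in (0:ℝ)..1, |x| ^ m
      = ∫ x in (0:ℝ)..1, x ^ m := by
        refine intervalIntegral.integral_congr fun x hx => ?_
        rw [Set.uIcc_of_le zero_le_one] at hx
        rw [abs_of_nonneg hx.1]
    _ = 1/(m+1) := by rw [integral_pow]; norm_num

lemma integrable_abs_pow_uniform (m : ℕ) :
    Integrable (fun x : ℝ => |x| ^ m) (volume.restrict (Set.Ioo (0:ℝ) 1)) := by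
  have h : IntegrableOn (fun x : ℝ => |x| ^ m) (Set.Icc (0:ℝ) 1) volume :=
    (continuous_abs.pow m).integrableOn_Icc
  exact h.mono_set Set.Ioo_subset_Icc_self

lemma expMeasure_eq_withDensity :
    expMeasure 1 = volume.withDensity (gammaPDF 1 1) := rfl

lemma gammaPDF_one_one (x : ℝ) :
    gammaPDF 1 1 x = ENNReal.ofReal (if 0 ≤ x then Real.exp (-x) else 0) := by
  rw [gammaPDF_eq]
  congr 1
  split_ifs with h
  · rw [Real.Gamma_one]
    rw [show (1:ℝ) - 1 = 0 by norm_num, Real.rpow_zero, Real.one_rpow]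
    ring_nf
  · rfl

lemma integral_abs_pow_exp (m : ℕ) :
    ∫ x, |x| ^ m ∂(expMeasure 1) = Nat.factorial m := by
  have hf : Measurable fun x : ℝ => Real.toNNReal (if 0 ≤ x then Real.exp (-x) else 0) := by
    refine Measurable.real_toNNReal ?_
    exact Measurable.ite measurableSet_Ici (Real.continuous_exp.comp continuous_neg).measurable
      measurable_const
  have hdens : expMeasure 1
      = volume.withDensity fun x => ((Real.toNNReal (if 0 ≤ x then Real.exp (-x) else 0) : ℝ≥0) : ℝ≥0∞) := by
    rw [expMeasure_eq_withDensity]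
    congr 1
    ext x
    rw [gammaPDF_one_one]
    rfl
  rw [hdens, integral_withDensity_eq_integral_smul hf]
  have e1 : (fun x : ℝ => Real.toNNReal (if 0 ≤ x then Real.exp (-x) else 0) • |x| ^ m)
      = Set.indicator (Set.Ici 0) (fun x : ℝ => Real.exp (-x) * |x| ^ m) := by
    ext x
    rw [Set.indicator_apply]
    by_cases h : (0:ℝ) ≤ x
    · rw [if_pos h]
      simp only [Set.mem_Ici, h, if_true, NNReal.smul_def, smul_eq_mul]
      rw [Real.coe_toNNReal _ (Real.exp_nonneg _)]
    · rw [if_neg h]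
      simp only [Set.mem_Ici, h, if_false]
      simp
  rw [e1, MeasureTheory.integral_indicator measurableSet_Ici,
    MeasureTheory.integral_Ici_eq_integral_Ioi]
  have e2 : ∫ x in Set.Ioi (0:ℝ), Real.exp (-x) * |x| ^ m
      = ∫ x in Set.Ioi (0:ℝ), Real.exp (-x) * x ^ ((m + 1 : ℝ) - 1) := by
    refine MeasureTheory.setIntegral_congr_fun measurableSet_Ioi fun x hx => ?_
    have hx' : (0:ℝ) < x := hx
    rw [abs_of_pos hx', show (m + 1 : ℝ) - 1 = (m : ℝ) by ring, Real.rpow_natCast]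
  rw [e2, ← Real.Gamma_eq_integral (by positivity : (0:ℝ) < (m:ℝ) + 1)]
  exact_mod_cast Real.Gamma_nat_eq_factorial m

lemma integrable_abs_pow_exp (m : ℕ) :
    Integrable (fun x : ℝ => |x| ^ m) (expMeasure 1) := by
  rw [expMeasure_eq_withDensity]
  have hmeaspdf : Measurable (gammaPDF 1 1) := (measurable_gammaPDFReal 1 1).ennreal_ofReal
  rw [integrable_withDensity_iff hmeaspdf (ae_of_all _ fun x => ENNReal.ofReal_lt_top)]
  have e1 : (fun x : ℝ => |x| ^ m * (gammaPDF 1 1 x).toReal)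
      = Set.indicator (Set.Ici 0) (fun x : ℝ => |x| ^ m * Real.exp (-x)) := by
    ext x
    rw [Set.indicator_apply, gammaPDF_one_one]
    by_cases h : (0:ℝ) ≤ x
    · rw [if_pos h]
      simp only [Set.mem_Ici, h, if_true]
      rw [ENNReal.toReal_ofReal (Real.exp_nonneg _)]
    · rw [if_neg h]
      simp only [Set.mem_Ici, h, if_false]
      simp
  rw [e1, integrable_indicator_iff measurableSet_Ici]
  rw [integrableOn_Ici_iff_integrableOn_Ioi]
  refine ((Real.GammaIntegral_convergent (show (0:ℝ) < (m:ℝ) + 1 by positivity)).congr_fun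
    (fun x hx => ?_) measurableSet_Ioi)
  have hx' : (0:ℝ) < x := hx
  dsimp only
  rw [show ((m:ℝ) + 1) - 1 = (m : ℝ) by ring, Real.rpow_natCast, abs_of_pos hx', mul_comm]

/-- **Adell–Lekuona.** Let `n ≥ k ≥ 1`, let `U₁, …, U_k` be i.i.d. uniform random variables
on `(0,1)` and `X₁, …, X_k` i.i.d. exponential random variables with parameter `1`, all
mutually independent, and let `S_k = U₁X₁ + ⋯ + U_kX_k`. Then
`⎡n, k⎤ = C(n,k) · E[S_k^{n-k}]`. -/
theorem unsigned_stirling1_eq_choose_mul_expectation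
    {Ω : Type*} [MeasurableSpace Ω] (P : Measure Ω) [IsProbabilityMeasure P]
    (n k : ℕ) (hk : 1 ≤ k) (hkn : k ≤ n)
    (U X : Fin k → Ω → ℝ)
    (hindep : iIndepFun (m := fun _ : Fin k ⊕ Fin k => (inferInstance : MeasurableSpace ℝ))
      (Sum.elim U X) P)
    (hU : ∀ j, Measure.map (U j) P = volume.restrict (Set.Ioo (0 : ℝ) 1))
    (hX : ∀ j, Measure.map (X j) P = expMeasure 1) :
    (stirling1 n k : ℝ) =
      (n.choose k : ℝ) * ∫ ω, (∑ j, U j ω * X j ω) ^ (n - k) ∂P := by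
  classical
  set m := n - k with hm
  have HU : ∀ j, AEMeasurable (U j) P := by
    intro j
    by_contra h
    have h0 := hU j
    rw [Measure.map_of_not_aemeasurable h] at h0
    have h1 : (volume.restrict (Set.Ioo (0:ℝ) 1)) (Set.Ioo 0 1) = 1 := by
      rw [Measure.restrict_apply measurableSet_Ioo]
      simp [Real.volume_Ioo]
    rw [← h0] at h1
    simp at h1
  have HX : ∀ j, AEMeasurable (X j) P := by
    intro j
    by_contra h
    have h0 := hX j
    rw [Measure.map_of_not_aemeasurable h] at h0
    have : IsProbabilityMeasure (expMeasure (1:ℝ)) :=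
      isProbabilityMeasure_expMeasure one_pos
    have h1 : expMeasure (1:ℝ) Set.univ = 1 := measure_univ
    rw [← h0] at h1
    simp at h1
  set U' : Fin k → Ω → ℝ := fun j => (HU j).mk (U j) with hU'def
  set X' : Fin k → Ω → ℝ := fun j => (HX j).mk (X j) with hX'def
  have hU'm : ∀ j, Measurable (U' j) := fun j => (HU j).measurable_mk
  have hX'm : ∀ j, Measurable (X' j) := fun j => (HX j).measurable_mk
  have hUU' : ∀ j, U j =ᵐ[P] U' j := fun j => (HU j).ae_eq_mk
  have hXX' : ∀ j, X j =ᵐ[P] X' j := fun j => (HX j).ae_eq_mk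
  have hmapU : ∀ j, Measure.map (U' j) P = volume.restrict (Set.Ioo (0:ℝ) 1) := fun j => by
    rw [← Measure.map_congr (hUU' j)]; exact hU j
  have hmapX : ∀ j, Measure.map (X' j) P = expMeasure 1 := fun j => by
    rw [← Measure.map_congr (hXX' j)]; exact hX j
  have hindep' : iIndepFun (m := fun _ : Fin k ⊕ Fin k => (inferInstance : MeasurableSpace ℝ))
      (Sum.elim U' X') P := by
    refine indep_congr' hindep ?_
    rintro (j|j)
    · exact hUU' j
    · exact hXX' j
  have hU'mem : ∀ j, ∀ᵐ ω ∂P, U' j ω ∈ Set.Ioo (0:ℝ) 1 := by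
    intro j
    have hpre : P (U' j ⁻¹' (Set.Ioo (0:ℝ) 1)ᶜ) = 0 := by
      rw [← Measure.map_apply (hU'm j) measurableSet_Ioo.compl, hmapU j,
        Measure.restrict_apply measurableSet_Ioo.compl]
      simp
    rw [ae_iff]
    exact hpre
  have hX'pos : ∀ j, ∀ᵐ ω ∂P, 0 ≤ X' j ω := by
    intro j
    have h0 : expMeasure (1:ℝ) (Set.Iio 0) = 0 := by
      rw [expMeasure_eq_withDensity, withDensity_apply _ measurableSet_Iio]
      exact lintegral_gammaPDF_of_nonpos le_rfl
    have hpre : P (X' j ⁻¹' (Set.Iio (0:ℝ))) = 0 := by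
      rw [← Measure.map_apply (hX'm j) measurableSet_Iio, hmapX j]
      exact h0
    rw [ae_iff]
    convert hpre using 2
    ext ω
    simp [not_le]
  -- the product family
  set V : Fin k ⊕ Fin k → Ω → ℝ := Sum.elim U' X' with hVdef
  have hVm : ∀ i, Measurable (V i) := by rintro (j|j); exacts [hU'm j, hX'm j]
  set F : (Fin k → ℕ) → (Fin k ⊕ Fin k) → Ω → ℝ :=
    fun d i ω => |V i ω| ^ (Sum.elim d d i) with hFdef
  have hFmeas : ∀ d i, Measurable (F d i) := fun d i => ((hVm i).abs.pow_const _)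
  have hFpos : ∀ d i ω, 0 ≤ F d i ω := fun d i ω => pow_nonneg (abs_nonneg _) _
  have hFindep : ∀ d, iIndepFun (m := fun _ : Fin k ⊕ Fin k => (inferInstance : MeasurableSpace ℝ))
      (F d) P := by
    intro d
    exact hindep'.comp (fun i (x : ℝ) => |x| ^ (Sum.elim d d i))
      (fun i => measurable_id.abs.pow_const _)
  have hFint : ∀ d (i : Fin k ⊕ Fin k), Integrable (F d i) P := by
    rintro d (j|j)
    · have h1 := integrable_abs_pow_uniform (d j)
      rw [← hmapU j] at h1
      exact (integrable_map_measure h1.aestronglyMeasurable (hU'm j).aemeasurable).mp h1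
    · have h1 := integrable_abs_pow_exp (d j)
      rw [← hmapX j] at h1
      exact (integrable_map_measure h1.aestronglyMeasurable (hX'm j).aemeasurable).mp h1
  have hmomU : ∀ (j : Fin k) (mm : ℕ), ∫ ω, |U' j ω| ^ mm ∂P = 1/((mm:ℝ)+1) := by
    intro j mm
    have := integral_map (μ := P) (hU'm j).aemeasurable
      (f := fun x : ℝ => |x| ^ mm) ((continuous_abs.pow mm).aestronglyMeasurable)
    rw [hmapU j] at this
    rw [← this]
    exact integral_abs_pow_uniform mm
  have hmomX : ∀ (j : Fin k) (mm : ℕ), ∫ ω, |X' j ω| ^ mm ∂P = (Nat.factorial mm : ℝ) := by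
    intro j mm
    have := integral_map (μ := P) (hX'm j).aemeasurable
      (f := fun x : ℝ => |x| ^ mm) ((continuous_abs.pow mm).aestronglyMeasurable)
    rw [hmapX j] at this
    rw [← this]
    exact integral_abs_pow_exp mm
  set D := piAntidiag (univ : Finset (Fin k)) m with hDdef
  have hsum_ae : (fun ω => (∑ j, U j ω * X j ω) ^ m)
      =ᵐ[P] (fun ω => ∑ d ∈ D, (Nat.multinomial univ d : ℝ) * ∏ i, F d i ω) := by
    filter_upwards [ae_all_iff.mpr hUU', ae_all_iff.mpr hXX',
      ae_all_iff.mpr hU'mem, ae_all_iff.mpr hX'pos] with ω h1 h2 h3 h4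
    have e0 : (∑ j, U j ω * X j ω) = ∑ j, U' j ω * X' j ω := by
      refine Finset.sum_congr rfl fun j _ => ?_
      rw [h1 j, h2 j]
    rw [e0, Finset.sum_pow_eq_sum_piAntidiag]
    refine Finset.sum_congr rfl fun d hd => ?_
    congr 1
    rw [Fintype.prod_sum_type, ← Finset.prod_mul_distrib]
    refine Finset.prod_congr rfl fun j _ => ?_
    have : F d (Sum.inl j) ω = |U' j ω| ^ (d j) := rfl
    rw [show F d (Sum.inl j) ω = |U' j ω| ^ (d j) from rfl,
      show F d (Sum.inr j) ω = |X' j ω| ^ (d j) from rfl,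
      abs_of_pos (h3 j).1, abs_of_nonneg (h4 j), mul_pow]
  rw [integral_congr_ae hsum_ae]
  rw [integral_finset_sum D (fun d _ =>
    (integrable_prod_indep univ (F d) (hFindep d) (hFmeas d) (hFint d)).const_mul _)]
  have hterm : ∀ d ∈ D, ∫ ω, (Nat.multinomial univ d : ℝ) * ∏ i, F d i ω ∂P
      = (Nat.factorial m : ℝ) * ∏ j, (1:ℝ)/((d j : ℝ) + 1) := by
    intro d hd
    rw [integral_const_mul,
      integral_prod_indep univ (F d) (hFindep d) (hFmeas d) (hFpos d),
      Fintype.prod_sum_type]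
    have eU : ∏ j, ∫ ω, F d (Sum.inl j) ω ∂P = ∏ j, (1:ℝ)/((d j : ℝ) + 1) := by
      refine Finset.prod_congr rfl fun j _ => ?_
      rw [show (fun ω => F d (Sum.inl j) ω) = fun ω => |U' j ω| ^ (d j) from rfl]
      exact hmomU j (d j)
    have eX : ∏ j, ∫ ω, F d (Sum.inr j) ω ∂P = ∏ j, (Nat.factorial (d j) : ℝ) := by
      refine Finset.prod_congr rfl fun j _ => ?_
      rw [show (fun ω => F d (Sum.inr j) ω) = fun ω => |X' j ω| ^ (d j) from rfl]
      exact hmomX j (d j)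
    rw [eU, eX]
    have hdsum : ∑ j, d j = m := by
      rw [hDdef, mem_piAntidiag] at hd
      exact hd.1
    have hspec : (∏ j, Nat.factorial (d j)) * Nat.multinomial univ d = Nat.factorial m := by
      rw [Nat.multinomial_spec, hdsum]
    have hspec' : (∏ j, (Nat.factorial (d j) : ℝ)) * (Nat.multinomial univ d : ℝ)
        = (Nat.factorial m : ℝ) := by
      exact_mod_cast congrArg (fun x : ℕ => (x:ℝ)) hspec
    linear_combination (∏ j, (1:ℝ)/((d j : ℝ) + 1)) * hspec'
  rw [Finset.sum_congr rfl hterm, ← Finset.mul_sum]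
  have hT := sum_piAntidiag_eq_hAux (univ : Finset (Fin k)) m
  rw [Finset.card_univ, Fintype.card_fin] at hT
  rw [hT]
  have hb := factorial_mul_stirling1 k n hkn
  rw [← hm] at hb
  have hcc : n.choose k * Nat.factorial k * Nat.factorial m = Nat.factorial n := by
    rw [hm]; exact Nat.choose_mul_factorial_mul_factorial hkn
  have hcc' : (n.choose k : ℝ) * (Nat.factorial k : ℝ) * (Nat.factorial m : ℝ)
      = (Nat.factorial n : ℝ) := by exact_mod_cast congrArg (fun x : ℕ => (x:ℝ)) hcc
  have hkne : (Nat.factorial k : ℝ) ≠ 0 := by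
    exact_mod_cast Nat.factorial_ne_zero k
  refine mul_left_cancel₀ hkne ?_
  calc (Nat.factorial k : ℝ) * (stirling1 n k : ℝ)
      = (Nat.factorial n : ℝ) * hAux m k := hb
    _ = ((n.choose k : ℝ) * (Nat.factorial k : ℝ) * (Nat.factorial m : ℝ)) * hAux m k := by
        rw [hcc']
    _ = (Nat.factorial k : ℝ) * ((n.choose k : ℝ) * ((Nat.factorial m : ℝ) * hAux m k)) := by
        ring
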